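/- Let X=(V,E,T) be a 2-dimensional (k0,k1)-regular (ε,μ)-cosystolic expander with |V| ≥ max{4/(1−2λ̃₂), 3/μ}, where λ̃₂ = λ̃₂(G₀(X)). If λ̃₂ < 1/2, then for every subset of edges ∅ ≠ F ⊊ E and every vertex v ∈ V, dist(F_v, Z¹(X)) = min{|F_v|, k₀ − |F_v|}. -/

import Mathlib

open Finset

/-- Symmetric-difference distance between two finite sets. -/
def sdist {α : Type} [DecidableEq α] (A B : Finset α) : ℕ :=
  (A \ B).card + (B \ A).card

/-- Distance from a finite set to a family of finite sets. -/
noncomputable def famDist {α : Type} [DecidableEq α] (A : Finset α) (Z : Set (Finset α)) : ℕ :=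
  sInf {d | ∃ z ∈ Z, sdist A z = d}

/-- `E` and `T` form the edges and triangles of a 2-dimensional simplicial complex on `V`. -/
def IsComplex {V : Type} [DecidableEq V] (E T : Finset (Finset V)) : Prop :=
  (∀ e ∈ E, e.card = 2) ∧ (∀ t ∈ T, t.card = 3) ∧
    ∀ t ∈ T, ∀ e, e ⊆ t → e.card = 2 → e ∈ E

/-- The complex is `(k₀, k₁)`-regular. -/
def IsRegularComplex {V : Type} [Fintype V] [DecidableEq V]
    (E T : Finset (Finset V)) (k₀ k₁ : ℕ) : Prop :=
  (∀ v : V, (E.filter (fun e => v ∈ e)).card = k₀) ∧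
    ∀ e ∈ E, (T.filter (fun t => e ⊆ t)).card = k₁

/-- Coboundary of a set of vertices: edges with exactly one endpoint in `S`. -/
def delta0 {V : Type} [DecidableEq V] (E : Finset (Finset V)) (S : Finset V) :
    Finset (Finset V) :=
  E.filter (fun e => (e ∩ S).card = 1)

/-- Coboundary of a set of edges: triangles containing an odd number of edges of `F`. -/
def delta1 {V : Type} [DecidableEq V] (T F : Finset (Finset V)) : Finset (Finset V) :=
  T.filter (fun t => Odd ((F.filter (fun e => e ⊆ t)).card))

/-- Local view of a vertex `v` with regard to a set of edges `F`. -/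
def localView {V : Type} [DecidableEq V] (F : Finset (Finset V)) (v : V) :
    Finset (Finset V) :=
  F.filter (fun e => v ∈ e)

/-- The 0-cocycles. -/
def Z0 {V : Type} [DecidableEq V] (E : Finset (Finset V)) : Set (Finset V) :=
  {S | delta0 E S = ∅}

/-- The 1-coboundaries: coboundaries of vertex sets (cuts). -/
def B1 {V : Type} [Fintype V] [DecidableEq V] (E : Finset (Finset V)) :
    Set (Finset (Finset V)) :=
  {B | ∃ S : Finset V, B = delta0 E S}

/-- The 1-cocycles: sets of edges with empty coboundary. -/
def Z1 {V : Type} [DecidableEq V] (E T : Finset (Finset V)) : Set (Finset (Finset V)) :=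
  {F | F ⊆ E ∧ delta1 T F = ∅}

/-- `(ε, μ)`-cosystolic expansion of a `(k₀, k₁)`-regular 2-dimensional complex. -/
def IsCosystolicExpander {V : Type} [Fintype V] [DecidableEq V]
    (E T : Finset (Finset V)) (k₀ k₁ : ℕ) (ε μ : ℝ) : Prop :=
  (∀ S : Finset V,
      (delta0 E S = ∅ →
        S = ∅ ∨ S = Finset.univ ∨ μ * (Fintype.card V : ℝ) ≤ (S.card : ℝ)) ∧
      (delta0 E S ≠ ∅ →
        ε * (k₀ : ℝ) * (famDist S (Z0 E) : ℝ) ≤ ((delta0 E S).card : ℝ))) ∧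
  (∀ F : Finset (Finset V), F ⊆ E →
      (delta1 T F = ∅ → F ∈ B1 E ∨ μ * (E.card : ℝ) ≤ (F.card : ℝ)) ∧
      (delta1 T F ≠ ∅ →
        ε * (k₁ : ℝ) * (famDist F (Z1 E T) : ℝ) ≤ ((delta1 T F).card : ℝ)))

/-- The underlying graph `G₀(X)` of the complex. -/
def G0 {V : Type} [DecidableEq V] (E : Finset (Finset V)) : SimpleGraph V where
  Adj u v := u ≠ v ∧ ({u, v} : Finset V) ∈ E
  symm := ⟨fun u v h => ⟨h.1.symm, by rw [Finset.pair_comm]; exact h.2⟩⟩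
  loopless := ⟨fun v h => h.1 rfl⟩

instance {V : Type} [DecidableEq V] (E : Finset (Finset V)) : DecidableRel (G0 E).Adj :=
  fun _ _ => inferInstanceAs (Decidable (_ ∧ _))

/-- The edge-graph `G₁(X)` of the complex: vertices are the edges of `X`, two edges
adjacent iff their union is a triangle. -/
def EdgeGraph {V : Type} [DecidableEq V] (E T : Finset (Finset V)) :
    SimpleGraph {e // e ∈ E} where
  Adj e f := e ≠ f ∧ (e.val ∪ f.val) ∈ T
  symm := ⟨fun e f h => ⟨h.1.symm, by rw [Finset.union_comm]; exact h.2⟩⟩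
  loopless := ⟨fun e h => h.1 rfl⟩

instance {V : Type} [DecidableEq V] (E T : Finset (Finset V)) :
    DecidableRel (EdgeGraph E T).Adj :=
  fun _ _ => inferInstanceAs (Decidable (_ ∧ _))

lemma adjMatrix_isHermitian {α : Type} [Fintype α] (G : SimpleGraph α)
    [DecidableRel G.Adj] : (SimpleGraph.adjMatrix ℝ G).IsHermitian := by
  refine Matrix.IsHermitian.ext fun i j => ?_
  simp [SimpleGraph.adjMatrix_apply, SimpleGraph.adj_comm]

/-- The eigenvalues of the adjacency matrix of `G`, sorted in ascending order. -/
noncomputable def eigsAsc {α : Type} [Fintype α] [DecidableEq α] (G : SimpleGraph α)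
    [DecidableRel G.Adj] : List ℝ :=
  Multiset.sort
    ((Finset.univ : Finset α).val.map (adjMatrix_isHermitian G).eigenvalues) (· ≤ ·)

/-- The normalized `i`-th largest adjacency eigenvalue (1-indexed) of a `k`-regular
graph `G`: `λ̃ᵢ = λᵢ / k`. -/
noncomputable def normEig {α : Type} [Fintype α] [DecidableEq α] (G : SimpleGraph α)
    [DecidableRel G.Adj] (k i : ℕ) : ℝ :=
  (eigsAsc G).getD (Fintype.card α - i) 0 / (k : ℝ)

/-- The number of edges of `G` with exactly one endpoint in `S` (counted via the
ordered pairs `(u, v)` with `u ∈ S`, `v ∉ S`, `u ~ v`). -/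
def cutEdges {α : Type} [Fintype α] [DecidableEq α] (G : SimpleGraph α)
    [DecidableRel G.Adj] (S : Finset α) : ℕ :=
  ((S ×ˢ Sᶜ).filter fun p => G.Adj p.1 p.2).card

/-- The normalized Cheeger constant of a `k`-regular graph. -/
noncomputable def normCheeger {α : Type} [Fintype α] [DecidableEq α] (G : SimpleGraph α)
    [DecidableRel G.Adj] (k : ℕ) : ℝ :=
  sInf {x : ℝ | ∃ S : Finset α, 0 < S.card ∧ (S.card : ℝ) ≤ (Fintype.card α : ℝ) / 2 ∧
    x = (cutEdges G S : ℝ) / ((k : ℝ) * (S.card : ℝ))}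

/-- The random walk on the `d`-regular graph `G` is `a`-rapidly mixing: from any initial
distribution, after `i` steps of the walk (with transition matrix `(1/d) • A(G)`),
the ℓ₂ distance to the uniform distribution is at most `a ^ i`. -/
def WalkRapidMixing {α : Type} [Fintype α] [DecidableEq α] (G : SimpleGraph α)
    [DecidableRel G.Adj] (d : ℕ) (a : ℝ) : Prop :=
  ∀ p₀ : α → ℝ, (∀ x, 0 ≤ p₀ x) → (∑ x, p₀ x = 1) → ∀ i : ℕ,
    Real.sqrt (∑ x, ((((d : ℝ)⁻¹ • SimpleGraph.adjMatrix ℝ G) ^ i).mulVec p₀ x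
      - (Fintype.card α : ℝ)⁻¹) ^ 2) ≤ a ^ i

lemma core_spec {ι : Type} [Fintype ι] (lam w y : ι → ℝ) (k L : ℝ)
    (hw : w ≠ 0) (hlw : ∀ i, lam i * w i = k * w i) (hlk : ∀ i, lam i ≤ k)
    (horth : ∑ i, y i * w i = 0)
    (hL : ∀ i j, i ≠ j → min (lam i) (lam j) ≤ L) :
    ∑ i, lam i * (y i)^2 ≤ L * ∑ i, (y i)^2 := by
  rw [Finset.mul_sum]
  by_cases hble : ∀ i, lam i ≤ L
  · exact Finset.sum_le_sum fun i _ => mul_le_mul_of_nonneg_right (hble i) (sq_nonneg _)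
  · push_neg at hble
    obtain ⟨i₀, hi₀⟩ := hble
    have hj : ∀ j, j ≠ i₀ → lam j ≤ L := by
      intro j hji
      have h := hL j i₀ hji
      rcases min_le_iff.mp (le_of_eq (rfl : min (lam j) (lam i₀) = _)) with _ | _
      · rcases le_total (lam j) (lam i₀) with h' | h'
        · rwa [min_eq_left h'] at h
        · rw [min_eq_right h'] at h; linarith
      · rcases le_total (lam j) (lam i₀) with h' | h'
        · rwa [min_eq_left h'] at h
        · rw [min_eq_right h'] at h; linarith
    have hwj : ∀ j, j ≠ i₀ → w j = 0 := by
      intro j hji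
      by_contra h
      have hk : lam j = k := mul_right_cancel₀ h (hlw j)
      have : k ≤ L := hk ▸ hj j hji
      exact absurd (le_trans (hlk i₀) this) (not_le.2 hi₀)
    have hwi₀ : w i₀ ≠ 0 := by
      intro h
      apply hw
      funext j
      by_cases hj' : j = i₀
      · rw [hj', h]; rfl
      · rw [hwj j hj']; rfl
    have hyi₀ : y i₀ = 0 := by
      have hs : ∑ i, y i * w i = y i₀ * w i₀ :=
        Finset.sum_eq_single i₀ (fun b _ hb => by rw [hwj b hb, mul_zero]) (by simp)
      rw [horth] at hs
      rcases mul_eq_zero.mp hs.symm with h | h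
      · exact h
      · exact absurd h hwi₀
    refine Finset.sum_le_sum fun i _ => ?_
    by_cases hi : i = i₀
    · rw [hi, hyi₀]; simp
    · exact mul_le_mul_of_nonneg_right (hj i hi) (sq_nonneg _)

lemma second_largest_min_le {α : Type} [Fintype α] [DecidableEq α] (f : α → ℝ)
    {i j : α} (hij : i ≠ j) :
    min (f i) (f j) ≤
      (Multiset.sort ((Finset.univ : Finset α).val.map f) (· ≤ ·)).getD
        (Fintype.card α - 2) 0 := by
  set l := Multiset.sort ((Finset.univ : Finset α).val.map f) (· ≤ ·) with hl
  have hlen : l.length = Fintype.card α := by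
    rw [hl, Multiset.length_sort, Multiset.card_map]; rfl
  have hn : 2 ≤ Fintype.card α := by
    have : ({i, j} : Finset α).card = 2 := by rw [Finset.card_insert_of_notMem (by simpa), Finset.card_singleton]
    calc 2 = ({i,j} : Finset α).card := this.symm
      _ ≤ _ := Finset.card_le_univ _
  have hp : Fintype.card α - 2 < l.length := by omega
  set p := Fintype.card α - 2 with hpdef
  have hsorted : List.Pairwise (· ≤ ·) l := Multiset.pairwise_sort _ _
  set c := l.getD p 0 with hc
  have hcg : c = l.get ⟨p, hp⟩ := by
    rw [hc, List.getD_eq_getElem l 0 hp]; rfl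
  by_contra hcon
  push_neg at hcon
  have hfi : c < f i := lt_of_lt_of_le hcon (min_le_left _ _)
  have hfj : c < f j := lt_of_lt_of_le hcon (min_le_right _ _)
  -- count elements greater than c
  have hcount2 : 2 ≤ l.countP (fun x => decide (c < x)) := by
    have hperm : (l : Multiset ℝ) = (Finset.univ : Finset α).val.map f := by
      rw [hl]; exact Multiset.sort_eq _ _
    have : l.countP (fun x => decide (c < x)) =
        Multiset.countP (fun x => decide (c < x)) ((Finset.univ : Finset α).val.map f) := by
      rw [← hperm, Multiset.coe_countP]
      simp
    rw [this, Multiset.countP_map]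
    have hsub : ({i, j} : Finset α) ⊆ Finset.univ.filter (fun a => c < f a) := by
      intro x hx
      rcases Finset.mem_insert.mp hx with h | h
      · subst h; simp [hfi]
      · rw [Finset.mem_singleton] at h; subst h; simp [hfj]
    have : ({i,j} : Finset α).card ≤ (Finset.univ.filter (fun a => c < f a)).card :=
      Finset.card_le_card hsub
    rw [Finset.card_insert_of_notMem (by simpa), Finset.card_singleton] at this
    calc 2 ≤ (Finset.univ.filter (fun a => c < f a)).card := this
      _ = _ := by
        show Multiset.card (Multiset.filter (fun a => c < f a) univ.val) = _
        congr 1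
        exact Multiset.filter_congr (fun x _ => by simp)
  have hcount1 : l.countP (fun x => decide (c < x)) ≤ 1 := by
    have hsplit : l = l.take (l.length - 1) ++ l.drop (l.length - 1) := (List.take_append_drop _ _).symm
    rw [hsplit, List.countP_append]
    have h1 : (l.take (l.length - 1)).countP (fun x => decide (c < x)) = 0 := by
      rw [List.countP_eq_zero]
      intro x hx
      rw [List.mem_take_iff_getElem] at hx
      obtain ⟨idx, hidx, hx⟩ := hx
      have hidx' : idx < l.length := by omega
      have : l.get ⟨idx, hidx'⟩ ≤ l.get ⟨p, hp⟩ := by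
        apply hsorted.rel_get_of_le
        simp only [Fin.mk_le_mk]
        omega
      simp only [List.get_eq_getElem] at this
      rw [← hx]
      simpa using not_lt.mpr (hcg ▸ this)
    have h2 : (l.drop (l.length - 1)).countP (fun x => decide (c < x)) ≤ 1 := by
      calc _ ≤ (l.drop (l.length - 1)).length := List.countP_le_length
        _ ≤ 1 := by rw [List.length_drop]; omega
    omega
  omega

open Matrix in
lemma adjMatrix_symm_bilin {α : Type} [Fintype α] [DecidableEq α] (G : SimpleGraph α)
    [DecidableRel G.Adj] (u y : α → ℝ) :
    ∑ v, u v * (SimpleGraph.adjMatrix ℝ G *ᵥ y) v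
      = ∑ v, (SimpleGraph.adjMatrix ℝ G *ᵥ u) v * y v := by
  simp only [Matrix.mulVec, dotProduct, Finset.mul_sum, Finset.sum_mul]
  rw [Finset.sum_comm]
  apply Finset.sum_congr rfl; intro w _
  apply Finset.sum_congr rfl; intro v _
  simp only [SimpleGraph.adjMatrix_apply]
  by_cases h : G.Adj v w
  · rw [if_pos h, if_pos (G.adj_symm h)]; ring
  · rw [if_neg h, if_neg (fun h' => h (G.adj_symm h'))]; ring

lemma adjMatrix_row_sum {α : Type} [Fintype α] [DecidableEq α] (G : SimpleGraph α)
    [DecidableRel G.Adj] (v : α) :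
    ∑ w, (SimpleGraph.adjMatrix ℝ G) v w = (G.degree v : ℝ) := by
  simp [SimpleGraph.adjMatrix_apply, SimpleGraph.degree, SimpleGraph.neighborFinset_eq_filter,
    Finset.sum_boole]

open Matrix in
lemma eigenvalue_le_degree {α : Type} [Fintype α] [DecidableEq α] (G : SimpleGraph α)
    [DecidableRel G.Adj] (k : ℕ) (hreg : ∀ v, G.degree v = k) (i : α) :
    (adjMatrix_isHermitian G).eigenvalues i ≤ (k : ℝ) := by
  have hA := adjMatrix_isHermitian G
  set A := SimpleGraph.adjMatrix ℝ G with hAdef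
  set u : α → ℝ := ⇑(hA.eigenvectorBasis i) with hu
  have hev : A *ᵥ u = hA.eigenvalues i • u := hA.mulVec_eigenvectorBasis i
  have hune : u ≠ 0 := fun h => hA.eigenvectorBasis.orthonormal.ne_zero i (by ext j; simpa using congrFun h j)
  have hne : (Finset.univ : Finset α).Nonempty := by
    rcases Function.ne_iff.mp hune with ⟨v, -⟩
    exact ⟨v, Finset.mem_univ v⟩
  obtain ⟨i₀, -, hmax⟩ := Finset.exists_mem_eq_sup' hne (fun j => |u j|)
  have hmax' : ∀ j, |u j| ≤ |u i₀| := fun j =>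
    hmax ▸ Finset.le_sup' (fun j => |u j|) (Finset.mem_univ j)
  have hupos : 0 < |u i₀| := by
    rcases Function.ne_iff.mp hune with ⟨v, hv⟩
    calc 0 < |u v| := abs_pos.mpr hv
      _ ≤ |u i₀| := hmax' v
  have hval : hA.eigenvalues i * u i₀ = ∑ j, A i₀ j * u j := by
    have := congrFun hev i₀
    simp only [Pi.smul_apply, smul_eq_mul] at this
    rw [← this]
    rfl
  have habs : |hA.eigenvalues i| * |u i₀| ≤ (k : ℝ) * |u i₀| := by
    calc |hA.eigenvalues i| * |u i₀| = |hA.eigenvalues i * u i₀| := (abs_mul _ _).symm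
      _ = |∑ j, A i₀ j * u j| := by rw [hval]
      _ ≤ ∑ j, |A i₀ j * u j| := Finset.abs_sum_le_sum_abs _ _
      _ ≤ ∑ j, A i₀ j * |u i₀| := by
          apply Finset.sum_le_sum
          intro j _
          rw [abs_mul]
          have h0 : |A i₀ j| = A i₀ j := by
            simp [hAdef, SimpleGraph.adjMatrix_apply]
            split <;> simp
          rw [h0]
          have : (0:ℝ) ≤ A i₀ j := by
            simp [hAdef, SimpleGraph.adjMatrix_apply]
            split <;> simp
          exact mul_le_mul_of_nonneg_left (hmax' j) this
      _ = (∑ j, A i₀ j) * |u i₀| := by rw [Finset.sum_mul]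
      _ = (k : ℝ) * |u i₀| := by rw [adjMatrix_row_sum, hreg]
  have := le_of_mul_le_mul_right habs hupos
  calc hA.eigenvalues i ≤ |hA.eigenvalues i| := le_abs_self _
    _ ≤ (k : ℝ) := this

open Matrix in
lemma quadform_le {α : Type} [Fintype α] [DecidableEq α] (G : SimpleGraph α)
    [DecidableRel G.Adj] (k : ℕ) (hreg : ∀ v, G.degree v = k) (hcard : 2 ≤ Fintype.card α)
    (x : α → ℝ) (hx : ∑ v, x v = 0) :
    ∑ u, (SimpleGraph.adjMatrix ℝ G *ᵥ x) u * x u ≤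
      (eigsAsc G).getD (Fintype.card α - 2) 0 * ∑ v, (x v)^2 := by
  classical
  have hA := adjMatrix_isHermitian G
  set A := SimpleGraph.adjMatrix ℝ G with hAdef
  set b := hA.eigenvectorBasis with hb
  set lam := hA.eigenvalues with hlam
  set L := (eigsAsc G).getD (Fintype.card α - 2) 0 with hL
  set X : EuclideanSpace ℝ α := WithLp.toLp 2 x with hX
  set One : EuclideanSpace ℝ α := WithLp.toLp 2 (fun _ => (1:ℝ)) with hOne
  set c : α → ℝ := fun i => b.repr X i with hc
  set w : α → ℝ := fun i => b.repr One i with hw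
  have hinner : ∀ y z : EuclideanSpace ℝ α, (inner ℝ y z : ℝ) = ∑ v, y v * z v := by
    intro y z
    simp [PiLp.inner_apply, RCLike.inner_apply, conj_trivial, mul_comm]
  have hrepr : ∀ (y : EuclideanSpace ℝ α) i, b.repr y i = ∑ v, b i v * y v := by
    intro y i
    rw [← hinner]
    exact b.repr_apply_apply y i
  have hpars : ∀ y z : EuclideanSpace ℝ α,
      ∑ i, b.repr y i * b.repr z i = ∑ v, y v * z v := by
    intro y z
    have h := b.repr.inner_map_map y z
    rw [hinner, hinner] at h
    exact h
  -- A applied to the all-ones vector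
  have hAone : A *ᵥ (fun _ => (1:ℝ)) = fun _ => (k : ℝ) := by
    funext v
    have : (fun _ => (1:ℝ)) = Function.const α (1:ℝ) := rfl
    rw [this, SimpleGraph.adjMatrix_mulVec_const_apply]
    rw [hreg v]; ring
  have hlamk : ∀ i, lam i ≤ (k:ℝ) := fun i => eigenvalue_le_degree G k hreg i
  have hmulvec : ∀ i, A *ᵥ ⇑(b i) = lam i • ⇑(b i) := fun i => hA.mulVec_eigenvectorBasis i
  have hlw : ∀ i, lam i * w i = (k:ℝ) * w i := by
    intro i
    rw [hw]
    simp only []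
    rw [hrepr One i]
    rw [Finset.mul_sum, Finset.mul_sum]
    have h1 : ∀ v, lam i * (b i v * One v) = (A *ᵥ ⇑(b i)) v * One v := by
      intro v
      rw [hmulvec i]
      simp [mul_comm, mul_assoc]
      ring
    rw [Finset.sum_congr rfl (fun v _ => h1 v)]
    have h2 : ∑ v, (A *ᵥ ⇑(b i)) v * One v = ∑ v, b i v * (A *ᵥ (fun _ => (1:ℝ))) v := by
      rw [← adjMatrix_symm_bilin]
    rw [h2, hAone]
    apply Finset.sum_congr rfl
    intro v _
    show b i v * (k:ℝ) = (k:ℝ) * (b i v * 1)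
    ring
  have hwne : w ≠ 0 := by
    intro h
    have hOne0 : One = 0 := by
      have : b.repr One = 0 := by
        ext i
        exact congrFun h i
      simpa using b.repr.map_eq_zero_iff.mp (by exact this)
    have hpos : 0 < Fintype.card α := by omega
    obtain ⟨v⟩ := Fintype.card_pos_iff.mp hpos
    have h1 : (1:ℝ) = (0:ℝ) := congrArg (fun y : EuclideanSpace ℝ α => y v) hOne0
    norm_num at h1
  have horth : ∑ i, c i * w i = 0 := by
    rw [hc, hw]
    simp only []
    rw [hpars X One]
    have he : ∀ v, X v * One v = x v := fun v => by show x v * (1:ℝ) = x v; ring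
    rw [Finset.sum_congr rfl (fun v _ => he v)]
    exact hx
  have hLlem : ∀ i j, i ≠ j → min (lam i) (lam j) ≤ L := by
    intro i j hij
    exact second_largest_min_le lam hij
  have hcore := core_spec lam w c k L hwne hlw hlamk horth hLlem
  -- convert conclusion
  have hqf : ∑ u, (A *ᵥ x) u * x u = ∑ i, lam i * (c i)^2 := by
    have hreprAx : ∀ i, b.repr (WithLp.toLp 2 (A *ᵥ x) : EuclideanSpace ℝ α) i = lam i * c i := by
      intro i
      rw [hrepr]
      have : ∑ v, b i v * (A *ᵥ x) v = ∑ v, (A *ᵥ ⇑(b i)) v * x v :=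
        adjMatrix_symm_bilin G (⇑(b i)) x
      rw [this]
      rw [hmulvec i]
      rw [hc]
      simp only []
      rw [hrepr X i]
      rw [Finset.mul_sum]
      apply Finset.sum_congr rfl
      intro v _
      simp [mul_comm, mul_assoc]
      ring
    have := hpars (WithLp.toLp 2 (A *ᵥ x) : EuclideanSpace ℝ α) X
    rw [← this]
    apply Finset.sum_congr rfl
    intro i _
    rw [hreprAx i, hc]
    ring
  have hnorm : ∑ v, (x v)^2 = ∑ i, (c i)^2 := by
    have h := hpars X X
    have h2 : ∑ v, (x v)^2 = ∑ v, X v * X v :=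
      Finset.sum_congr rfl fun v _ => by show (x v)^2 = x v * x v; ring
    rw [h2, ← h]
    apply Finset.sum_congr rfl
    intro i _
    show c i * c i = (c i)^2
    ring
  rw [hqf, hnorm]
  exact hcore

lemma edge_eq_pair {V : Type} [DecidableEq V] {e : Finset V} (h2 : e.card = 2) {v : V}
    (hv : v ∈ e) : ∃ u, u ≠ v ∧ e = {v, u} := by
  obtain ⟨a, b, hab, he⟩ := Finset.card_eq_two.mp h2
  subst he
  rcases Finset.mem_insert.mp hv with rfl | hb
  · exact ⟨b, fun h => hab h.symm, rfl⟩
  · rw [Finset.mem_singleton] at hb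
    subst hb
    exact ⟨a, hab, Finset.pair_comm a v⟩

lemma G0_degree {V : Type} [Fintype V] [DecidableEq V] (E : Finset (Finset V))
    (hE2 : ∀ e ∈ E, e.card = 2) (v : V) :
    (G0 E).degree v = (E.filter (fun e => v ∈ e)).card := by
  rw [← SimpleGraph.card_neighborFinset_eq_degree]
  apply Finset.card_bij (fun u _ => ({v, u} : Finset V))
  · intro u hu
    rw [SimpleGraph.mem_neighborFinset] at hu
    rw [Finset.mem_filter]
    exact ⟨hu.2, Finset.mem_insert_self v _⟩
  · intro u hu u' hu' h
    rw [SimpleGraph.mem_neighborFinset] at hu hu'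
    have : u' ∈ ({v, u} : Finset V) := h ▸ Finset.mem_insert.mpr (Or.inr (Finset.mem_singleton_self u'))
    rcases Finset.mem_insert.mp this with h' | h'
    · exact absurd h'.symm hu'.1
    · exact (Finset.mem_singleton.mp h').symm
  · intro e he
    rw [Finset.mem_filter] at he
    obtain ⟨u, huv, hue⟩ := edge_eq_pair (hE2 e he.1) he.2
    refine ⟨u, ?_, hue.symm⟩
    rw [SimpleGraph.mem_neighborFinset]
    exact ⟨fun h => huv h.symm, hue ▸ he.1⟩

lemma pair_inter_card_one {V : Type} [DecidableEq V] {a b : V} (S : Finset V)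
    (ha : a ∈ S) (hb : b ∉ S) : (({a, b} : Finset V) ∩ S).card = 1 := by
  have : ({a, b} : Finset V) ∩ S = {a} := by
    ext x
    simp only [Finset.mem_inter, Finset.mem_insert, Finset.mem_singleton]
    constructor
    · rintro ⟨rfl | rfl, hxS⟩
      · rfl
      · exact absurd hxS hb
    · rintro rfl
      exact ⟨Or.inl rfl, ha⟩
  rw [this, Finset.card_singleton]

lemma ordered_cut_card {V : Type} [Fintype V] [DecidableEq V] (E : Finset (Finset V))
    (hE2 : ∀ e ∈ E, e.card = 2) (S : Finset V) :
    ((Finset.univ ×ˢ Finset.univ).filter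
        (fun p : V × V => (G0 E).Adj p.1 p.2 ∧ p.1 ∈ S ∧ p.2 ∉ S)).card
      = (delta0 E S).card := by
  apply Finset.card_bij (fun p _ => ({p.1, p.2} : Finset V))
  · rintro ⟨a, b⟩ hp
    rw [Finset.mem_filter] at hp
    obtain ⟨-, hadj, haS, hbS⟩ := hp
    rw [delta0, Finset.mem_filter]
    exact ⟨hadj.2, pair_inter_card_one S haS hbS⟩
  · rintro ⟨a, b⟩ hp ⟨a', b'⟩ hp' h
    rw [Finset.mem_filter] at hp hp'
    obtain ⟨-, hadj, haS, hbS⟩ := hp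
    obtain ⟨-, hadj', haS', hbS'⟩ := hp'
    simp only at h
    have ha' : a' ∈ ({a, b} : Finset V) := h ▸ Finset.mem_insert_self a' _
    have hb' : b' ∈ ({a, b} : Finset V) := h ▸ Finset.mem_insert.mpr (Or.inr (Finset.mem_singleton_self b'))
    have haa : a' = a := by
      rcases Finset.mem_insert.mp ha' with h' | h'
      · exact h'
      · rw [Finset.mem_singleton] at h'
        subst h'
        exact absurd haS' hbS
    have hbb : b' = b := by
      rcases Finset.mem_insert.mp hb' with h' | h'
      · subst h'
        exact absurd haS hbS'
      · exact Finset.mem_singleton.mp h'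
    simp [haa, hbb]
  · intro e he
    rw [delta0, Finset.mem_filter] at he
    obtain ⟨heE, hecard⟩ := he
    obtain ⟨a, hae⟩ := Finset.card_eq_one.mp hecard
    have haS : a ∈ S := by
      have : a ∈ e ∩ S := hae ▸ Finset.mem_singleton_self a
      exact (Finset.mem_inter.mp this).2
    have haE : a ∈ e := by
      have : a ∈ e ∩ S := hae ▸ Finset.mem_singleton_self a
      exact (Finset.mem_inter.mp this).1
    obtain ⟨b, hba, heq⟩ := edge_eq_pair (hE2 e heE) haE
    have hbS : b ∉ S := by
      intro hbS
      have : b ∈ e ∩ S := Finset.mem_inter.mpr ⟨heq ▸ Finset.mem_insert.mpr (Or.inr (Finset.mem_singleton_self b)), hbS⟩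
      rw [hae, Finset.mem_singleton] at this
      exact hba this
    refine ⟨(a, b), ?_, heq.symm⟩
    rw [Finset.mem_filter]
    refine ⟨Finset.mem_product.mpr ⟨Finset.mem_univ _, Finset.mem_univ _⟩, ⟨fun h => hba h.symm, heq ▸ heE⟩, haS, hbS⟩

open Matrix in
lemma delta0_card_bound {V : Type} [Fintype V] [DecidableEq V] (E : Finset (Finset V)) (k0 : ℕ)
    (hE2 : ∀ e ∈ E, e.card = 2) (hreg0 : ∀ v : V, (E.filter (fun e => v ∈ e)).card = k0)
    (hcard : 2 ≤ Fintype.card V) (S : Finset V) :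
    ((k0:ℝ) - (eigsAsc (G0 E)).getD (Fintype.card V - 2) 0) * S.card
        * ((Fintype.card V : ℝ) - S.card)
      ≤ ((delta0 E S).card : ℝ) * (Fintype.card V : ℝ) := by
  classical
  set G := G0 E with hG
  set A := SimpleGraph.adjMatrix ℝ G with hA
  set lam2 := (eigsAsc G).getD (Fintype.card V - 2) 0 with hlam2
  set nn := Fintype.card V with hnn
  set sR : ℝ := (S.card : ℝ) with hsR
  set x : V → ℝ := fun u => if u ∈ S then ((nn : ℝ) - sR) else -sR with hx
  have hdeg : ∀ v, G.degree v = k0 := fun v => by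
    show (G0 E).degree v = k0
    rw [G0_degree E hE2 v, hreg0 v]
  have hsymA : ∀ u w, A u w = A w u := by
    intro u w
    simp only [hA, SimpleGraph.adjMatrix_apply]
    by_cases h : G.Adj u w
    · rw [if_pos h, if_pos (G.adj_symm h)]
    · rw [if_neg h, if_neg (fun h' => h (G.adj_symm h'))]
  have hrow : ∀ u, ∑ w, A u w = (k0 : ℝ) := by
    intro u
    rw [hA, adjMatrix_row_sum, hdeg u]
  have hcardle : S.card ≤ nn := by rw [hnn, ← Finset.card_univ]; exact Finset.card_le_univ S
  have hcompl : ((Sᶜ : Finset V).card : ℝ) = (nn : ℝ) - sR := by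
    rw [Finset.card_compl, Nat.cast_sub hcardle]
    try rfl
  have hsum0 : ∑ v, x v = 0 := by
    rw [← Finset.sum_add_sum_compl S]
    have h1 : ∑ v ∈ S, x v = sR * ((nn:ℝ) - sR) := by
      rw [Finset.sum_congr rfl (fun u hu => if_pos hu), Finset.sum_const, nsmul_eq_mul, hsR]
    have h2 : ∑ v ∈ Sᶜ, x v = ((nn:ℝ) - sR) * (-sR) := by
      rw [Finset.sum_congr rfl (fun u hu => if_neg (Finset.mem_compl.mp hu)),
        Finset.sum_const, nsmul_eq_mul, hcompl]
    rw [h1, h2]; ring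
  have hsumsq : ∑ v, (x v)^2 = sR * ((nn:ℝ) - sR) * nn := by
    rw [← Finset.sum_add_sum_compl S]
    have h1 : ∑ v ∈ S, (x v)^2 = sR * ((nn:ℝ) - sR)^2 := by
      have he : ∑ v ∈ S, (x v)^2 = ∑ _v ∈ S, ((nn:ℝ) - sR)^2 :=
        Finset.sum_congr rfl (fun u hu => by
          rw [show x u = (nn:ℝ) - sR from if_pos hu])
      rw [he, Finset.sum_const, nsmul_eq_mul, hsR]
    have h2 : ∑ v ∈ Sᶜ, (x v)^2 = ((nn:ℝ) - sR) * sR^2 := by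
      have he : ∑ v ∈ Sᶜ, (x v)^2 = ∑ _v ∈ Sᶜ, (-sR)^2 :=
        Finset.sum_congr rfl (fun u hu => by
          rw [show x u = -sR from if_neg (Finset.mem_compl.mp hu)])
      rw [he, Finset.sum_const, nsmul_eq_mul, hcompl]
      ring
    rw [h1, h2]; ring
  -- the quadratic form
  set Q := ∑ u, (A *ᵥ x) u * x u with hQ
  have hQexp : Q = ∑ u, ∑ w, A u w * x u * x w := by
    rw [hQ]
    apply Finset.sum_congr rfl
    intro u _
    rw [Matrix.mulVec, dotProduct, Finset.sum_mul]
    apply Finset.sum_congr rfl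
    intro w _
    ring
  have hid1 : ∑ u, ∑ w, A u w * (x u - x w)^2 = 2 * (k0:ℝ) * (∑ v, (x v)^2) - 2 * Q := by
    have hptw : ∀ u w, A u w * (x u - x w)^2
        = A u w * (x u)^2 + A u w * (x w)^2 - 2 * (A u w * x u * x w) := by
      intro u w; ring
    rw [Finset.sum_congr rfl (fun u _ => Finset.sum_congr rfl (fun w _ => hptw u w))]
    have hsplit : ∀ u, ∑ w, (A u w * (x u)^2 + A u w * (x w)^2 - 2 * (A u w * x u * x w))
        = (∑ w, A u w * (x u)^2) + (∑ w, A u w * (x w)^2) - 2 * ∑ w, A u w * x u * x w := by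
      intro u
      rw [Finset.sum_sub_distrib, Finset.sum_add_distrib, Finset.mul_sum]
    rw [Finset.sum_congr rfl (fun u _ => hsplit u), Finset.sum_sub_distrib,
      Finset.sum_add_distrib]
    have hs1 : ∑ u, ∑ w, A u w * (x u)^2 = (k0:ℝ) * ∑ v, (x v)^2 := by
      rw [Finset.mul_sum]
      apply Finset.sum_congr rfl
      intro u _
      rw [← Finset.sum_mul, hrow u]
      try ring
    have hs2 : ∑ u, ∑ w, A u w * (x w)^2 = (k0:ℝ) * ∑ v, (x v)^2 := by
      rw [Finset.sum_comm, Finset.mul_sum]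
      apply Finset.sum_congr rfl
      intro w _
      rw [Finset.sum_congr rfl (fun u _ => by rw [hsymA u w]), ← Finset.sum_mul, hrow w]
      try ring
    have hs3 : ∑ u, (2:ℝ) * ∑ w, A u w * x u * x w = 2 * Q := by
      rw [← Finset.mul_sum, hQexp]
    rw [hs1, hs2, hs3]
    ring
  have hid2 : ∑ u, ∑ w, A u w * (x u - x w)^2
      = 2 * ((delta0 E S).card : ℝ) * (nn:ℝ)^2 := by
    have hptw : ∀ u w, A u w * (x u - x w)^2
        = if G.Adj u w ∧ ¬(u ∈ S ↔ w ∈ S) then ((nn:ℝ))^2 else 0 := by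
      intro u w
      by_cases hadj : G.Adj u w
      · by_cases huS : u ∈ S <;> by_cases hwS : w ∈ S
        · rw [if_neg (by tauto)]
          simp only [hx, hA, SimpleGraph.adjMatrix_apply, if_pos huS, if_pos hwS, if_pos hadj]
          ring
        · rw [if_pos (by tauto)]
          simp only [hx, hA, SimpleGraph.adjMatrix_apply, if_pos huS, if_neg hwS, if_pos hadj]
          ring
        · rw [if_pos (by tauto)]
          simp only [hx, hA, SimpleGraph.adjMatrix_apply, if_neg huS, if_pos hwS, if_pos hadj]
          ring
        · rw [if_neg (by tauto)]
          simp only [hx, hA, SimpleGraph.adjMatrix_apply, if_neg huS, if_neg hwS, if_pos hadj]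
          ring
      · rw [if_neg (by tauto)]
        simp only [hA, SimpleGraph.adjMatrix_apply, if_neg hadj]
        ring
    rw [Finset.sum_congr rfl (fun u _ => Finset.sum_congr rfl (fun w _ => hptw u w))]
    rw [← Finset.sum_product']
    rw [← Finset.sum_filter]
    rw [Finset.sum_const, nsmul_eq_mul]
    have hsplitP : (Finset.univ ×ˢ Finset.univ).filter
          (fun p : V × V => G.Adj p.1 p.2 ∧ ¬(p.1 ∈ S ↔ p.2 ∈ S))
        = ((Finset.univ ×ˢ Finset.univ).filter
            (fun p : V × V => G.Adj p.1 p.2 ∧ p.1 ∈ S ∧ p.2 ∉ S))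
          ∪ ((Finset.univ ×ˢ Finset.univ).filter
            (fun p : V × V => G.Adj p.1 p.2 ∧ p.1 ∉ S ∧ p.2 ∈ S)) := by
      rw [← Finset.filter_or]
      apply Finset.filter_congr
      intro p _
      constructor
      · rintro ⟨hadj, hiff⟩
        by_cases h1 : p.1 ∈ S
        · exact Or.inl ⟨hadj, h1, fun h2 => hiff ⟨fun _ => h2, fun _ => h1⟩⟩
        · refine Or.inr ⟨hadj, h1, ?_⟩
          by_contra h2
          exact hiff ⟨fun h => absurd h h1, fun h => absurd h h2⟩
      · rintro (⟨hadj, h1, h2⟩ | ⟨hadj, h1, h2⟩)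
        · exact ⟨hadj, fun hiff => h2 (hiff.mp h1)⟩
        · exact ⟨hadj, fun hiff => h1 (hiff.mpr h2)⟩
    have hdisj : Disjoint
        ((Finset.univ ×ˢ Finset.univ).filter
          (fun p : V × V => G.Adj p.1 p.2 ∧ p.1 ∈ S ∧ p.2 ∉ S))
        ((Finset.univ ×ˢ Finset.univ).filter
          (fun p : V × V => G.Adj p.1 p.2 ∧ p.1 ∉ S ∧ p.2 ∈ S)) := by
      rw [Finset.disjoint_left]
      intro p hp1 hp2
      rw [Finset.mem_filter] at hp1 hp2
      exact hp2.2.2.1 hp1.2.2.1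
    have hswap : ((Finset.univ ×ˢ Finset.univ).filter
          (fun p : V × V => G.Adj p.1 p.2 ∧ p.1 ∉ S ∧ p.2 ∈ S)).card
        = ((Finset.univ ×ˢ Finset.univ).filter
          (fun p : V × V => G.Adj p.1 p.2 ∧ p.1 ∈ S ∧ p.2 ∉ S)).card := by
      apply Finset.card_bij (fun p _ => (p.2, p.1))
      · rintro ⟨a, b⟩ hp
        rw [Finset.mem_filter] at hp ⊢
        exact ⟨Finset.mem_product.mpr ⟨Finset.mem_univ _, Finset.mem_univ _⟩,
          G.adj_symm hp.2.1, hp.2.2.2, hp.2.2.1⟩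
      · rintro ⟨a, b⟩ _ ⟨a', b'⟩ _ h
        simp only [Prod.mk.injEq] at h
        simp [h.1, h.2]
      · rintro ⟨a, b⟩ hp
        rw [Finset.mem_filter] at hp
        refine ⟨(b, a), ?_, rfl⟩
        rw [Finset.mem_filter]
        exact ⟨Finset.mem_product.mpr ⟨Finset.mem_univ _, Finset.mem_univ _⟩,
          G.adj_symm hp.2.1, hp.2.2.2, hp.2.2.1⟩
    rw [hsplitP, Finset.card_union_of_disjoint hdisj, hswap,
      ordered_cut_card E hE2 S]
    push_cast
    ring
  have hspec : Q ≤ lam2 * ∑ v, (x v)^2 :=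
    quadform_le (G0 E) k0 hdeg hcard x hsum0
  have hQval : Q = (k0:ℝ) * (sR * ((nn:ℝ) - sR) * nn) - ((delta0 E S).card : ℝ) * (nn:ℝ)^2 := by
    have := hid1
    rw [hid2, hsumsq] at this
    linarith
  rw [hQval, hsumsq] at hspec
  have hnpos : (0:ℝ) < (nn : ℝ) := by
    have : 0 < nn := by omega
    exact_mod_cast this
  nlinarith [hspec, hnpos]

noncomputable def oth {V : Type} [DecidableEq V] (u : V) (e : Finset V) : V :=
  if h : (e.erase u).card = 1 then (Finset.card_eq_one.mp h).choose else u

lemma oth_spec {V : Type} [DecidableEq V] {u : V} {e : Finset V} (h2 : e.card = 2)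
    (hu : u ∈ e) : oth u e ∈ e ∧ oth u e ≠ u ∧ e = {u, oth u e} := by
  obtain ⟨w, hwu, hew⟩ := edge_eq_pair h2 hu
  have herase : e.erase u = {w} := by
    rw [hew]
    rw [Finset.erase_insert (by simpa using (Ne.symm hwu))]
  have hc1 : (e.erase u).card = 1 := by rw [herase]; exact Finset.card_singleton w
  have hval : e.erase u = {oth u e} := by
    unfold oth
    rw [dif_pos hc1]
    exact (Finset.card_eq_one.mp hc1).choose_spec
  have hmem : oth u e ∈ e.erase u := by rw [hval]; exact Finset.mem_singleton_self _
  refine ⟨Finset.mem_of_mem_erase hmem, Finset.ne_of_mem_erase hmem, ?_⟩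
  have hin := Finset.insert_erase hu
  rw [hval] at hin
  exact hin.symm

lemma oth_inj {V : Type} [DecidableEq V] {u : V} {e f : Finset V} (he2 : e.card = 2)
    (hf2 : f.card = 2) (hue : u ∈ e) (huf : u ∈ f) (h : oth u e = oth u f) : e = f := by
  rw [(oth_spec he2 hue).2.2, (oth_spec hf2 huf).2.2, h]

lemma count_swap {V : Type} [DecidableEq V] (W : Finset V) (z₀ : Finset (Finset V)) :
    ∑ w ∈ W, (z₀.filter (fun e => w ∈ e)).card = ∑ e ∈ z₀, (e ∩ W).card := by
  have h1 : ∀ w, (z₀.filter (fun e => w ∈ e)).card = ∑ e ∈ z₀, if w ∈ e then 1 else 0 :=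
    fun w => by rw [Finset.card_filter]
  rw [Finset.sum_congr rfl (fun w _ => h1 w), Finset.sum_comm]
  apply Finset.sum_congr rfl
  intro e _
  rw [← Finset.card_filter]
  congr 1
  ext x
  simp [Finset.mem_filter, Finset.mem_inter, and_comm]

lemma handshake {V : Type} [Fintype V] [DecidableEq V] (E : Finset (Finset V)) (k0 : ℕ)
    (hE2 : ∀ e ∈ E, e.card = 2) (hreg0 : ∀ v : V, (E.filter (fun e => v ∈ e)).card = k0) :
    Fintype.card V * k0 = 2 * E.card := by
  have h := count_swap (Finset.univ : Finset V) E
  rw [Finset.sum_congr rfl (fun w _ => hreg0 w), Finset.sum_const, smul_eq_mul,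
    Finset.card_univ] at h
  rw [h]
  rw [Finset.sum_congr rfl (fun e he => by rw [Finset.inter_univ, hE2 e he]),
    Finset.sum_const, smul_eq_mul, mul_comm]

lemma delta0_compl {V : Type} [Fintype V] [DecidableEq V] (E : Finset (Finset V))
    (hE2 : ∀ e ∈ E, e.card = 2) (S : Finset V) : delta0 E Sᶜ = delta0 E S := by
  unfold delta0
  apply Finset.filter_congr
  intro e he
  have hsplit : (e ∩ Sᶜ).card + (e ∩ S).card = 2 := by
    have h1 : e ∩ Sᶜ = e \ S := by
      ext x; simp [Finset.mem_inter, Finset.mem_sdiff, Finset.mem_compl]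
    rw [h1, Finset.card_sdiff_add_card_inter, hE2 e he]
  omega

lemma pair_inter_card {V : Type} [DecidableEq V] {a b : V} (hab : a ≠ b) (S : Finset V) :
    (({a, b} : Finset V) ∩ S).card
      = (if a ∈ S then 1 else 0) + (if b ∈ S then 1 else 0) := by
  have h : ({a,b} : Finset V) ∩ S = ({a,b} : Finset V).filter (· ∈ S) := by
    ext x
    simp [Finset.mem_filter, Finset.mem_inter]
  rw [h, Finset.card_filter, Finset.sum_insert (by simpa using hab), Finset.sum_singleton]

lemma pair_inter_card_two {V : Type} [DecidableEq V] {a b : V} (hab : a ≠ b) (S : Finset V)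
    (ha : a ∈ S) (hb : b ∈ S) : (({a, b} : Finset V) ∩ S).card = 2 := by
  have : ({a, b} : Finset V) ∩ S = {a, b} := by
    ext x
    simp only [Finset.mem_inter, Finset.mem_insert, Finset.mem_singleton]
    constructor
    · tauto
    · rintro (rfl | rfl) <;> simp [ha, hb]
  rw [this, Finset.card_insert_of_notMem (by simpa using hab), Finset.card_singleton]

lemma pair_inter_card_zero {V : Type} [DecidableEq V] {a b : V} (S : Finset V)
    (ha : a ∉ S) (hb : b ∉ S) : (({a, b} : Finset V) ∩ S).card = 0 := by
  rw [Finset.card_eq_zero]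
  ext x
  simp only [Finset.mem_inter, Finset.mem_insert, Finset.mem_singleton]
  constructor
  · rintro ⟨rfl | rfl, hx⟩
    · exact absurd hx ha
    · exact absurd hx hb
  · intro h
    exact absurd h (Finset.notMem_empty x)

lemma cut_in_Z1 {V : Type} [Fintype V] [DecidableEq V] (E T : Finset (Finset V))
    (hX : IsComplex E T) (S : Finset V) : delta0 E S ∈ Z1 E T := by
  constructor
  · exact Finset.filter_subset _ _
  · rw [delta1, Finset.filter_eq_empty_iff]
    intro t ht
    obtain ⟨a, b, c, hab, hac, hbc, hteq⟩ := Finset.card_eq_three.mp (hX.2.1 t ht)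
    intro hodd
    have hP : (delta0 E S).filter (fun e => e ⊆ t)
        = ({({a,b} : Finset V), {a,c}, {b,c}} : Finset (Finset V)).filter
            (fun e => (e ∩ S).card = 1) := by
      ext e
      simp only [Finset.mem_filter, delta0, Finset.mem_insert, Finset.mem_singleton]
      constructor
      · rintro ⟨⟨heE, hcard⟩, het⟩
        refine ⟨?_, hcard⟩
        -- e is a 2-subset of t
        have he2 : e.card = 2 := hX.1 e heE
        obtain ⟨x, y, hxy, hexy⟩ := Finset.card_eq_two.mp he2
        subst hexy
        have hx : x ∈ t := het (Finset.mem_insert_self x _)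
        have hy : y ∈ t := het (Finset.mem_insert.mpr (Or.inr (Finset.mem_singleton_self y)))
        rw [hteq] at hx hy
        simp only [Finset.mem_insert, Finset.mem_singleton] at hx hy
        rcases hx with rfl | rfl | rfl <;> rcases hy with rfl | rfl | rfl <;>
          first
            | exact absurd rfl hxy
            | simp [Finset.pair_comm]
            | tauto
      · rintro ⟨h3, hcard⟩
        have he2 : e.card = 2 := by
          rcases h3 with rfl | rfl | rfl
          · rw [Finset.card_insert_of_notMem (by simpa using hab), Finset.card_singleton]
          · rw [Finset.card_insert_of_notMem (by simpa using hac), Finset.card_singleton]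
          · rw [Finset.card_insert_of_notMem (by simpa using hbc), Finset.card_singleton]
        have het : e ⊆ t := by
          rcases h3 with rfl | rfl | rfl <;>
          · rw [hteq]
            intro x hx
            simp only [Finset.mem_insert, Finset.mem_singleton] at hx ⊢
            tauto
        exact ⟨⟨hX.2.2 t ht e het he2, hcard⟩, het⟩
    have hmem1 : ({a,c} : Finset V) ∉ ({({b,c} : Finset V)} : Finset (Finset V)) := by
      simp only [Finset.mem_singleton]
      intro h
      have : a ∈ ({b, c} : Finset V) := h ▸ Finset.mem_insert_self a _
      simp only [Finset.mem_insert, Finset.mem_singleton] at this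
      tauto
    have hmem0 : ({a,b} : Finset V) ∉ ({({a,c} : Finset V), {b,c}} : Finset (Finset V)) := by
      simp only [Finset.mem_insert, Finset.mem_singleton]
      push_neg
      constructor
      · intro h
        have : b ∈ ({a, c} : Finset V) := h ▸ Finset.mem_insert.mpr (Or.inr (Finset.mem_singleton_self b))
        simp only [Finset.mem_insert, Finset.mem_singleton] at this
        tauto
      · intro h
        have : a ∈ ({b, c} : Finset V) := h ▸ Finset.mem_insert_self a _
        simp only [Finset.mem_insert, Finset.mem_singleton] at this
        tauto
    rw [hP, Finset.card_filter, Finset.sum_insert hmem0, Finset.sum_insert hmem1,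
      Finset.sum_singleton] at hodd
    simp only [pair_inter_card hab S, pair_inter_card hac S, pair_inter_card hbc S] at hodd
    by_cases haS : a ∈ S <;> by_cases hbS : b ∈ S <;> by_cases hcS : c ∈ S <;>
      simp [haS, hbS, hcS, Nat.odd_iff] at hodd

lemma empty_in_Z1 {V : Type} [Fintype V] [DecidableEq V] (E T : Finset (Finset V)) :
    (∅ : Finset (Finset V)) ∈ Z1 E T := by
  constructor
  · exact Finset.empty_subset E
  · rw [delta1, Finset.filter_eq_empty_iff]
    intro t _
    simp [Nat.odd_iff]

lemma star_eq_delta0_singleton {V : Type} [Fintype V] [DecidableEq V] (E : Finset (Finset V))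
    (hE2 : ∀ e ∈ E, e.card = 2) (v : V) :
    delta0 E {v} = E.filter (fun e => v ∈ e) := by
  unfold delta0
  apply Finset.filter_congr
  intro e _
  constructor
  · intro h
    by_contra hv
    have : e ∩ {v} = ∅ := by
      ext x
      simp only [Finset.mem_inter, Finset.mem_singleton]
      constructor
      · rintro ⟨hx, rfl⟩; exact absurd hx hv
      · intro h; exact absurd h (Finset.notMem_empty x)
    rw [this] at h
    simp at h
  · intro hv
    have : e ∩ {v} = {v} := by
      ext x
      simp only [Finset.mem_inter, Finset.mem_singleton]
      constructor
      · tauto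
      · rintro rfl; exact ⟨hv, rfl⟩
    rw [this, Finset.card_singleton]

lemma nat_add_le_mul_succ {p q : ℕ} (hp : 1 ≤ p) (hq : 1 ≤ q) : p + q ≤ p * q + 1 := by
  obtain ⟨p', rfl⟩ := Nat.exists_eq_add_of_le hp
  obtain ⟨q', rfl⟩ := Nat.exists_eq_add_of_le hq
  have : (1 + p') * (1 + q') = 1 + p' + q' + p' * q' := by ring
  omega


lemma final_arith (k L s t n c : ℝ) (h1 : (k - L) * s * t ≤ c * n) (hs : k ≤ s)
    (ht : k + 1 ≤ t) (hn : n = s + t) (hc : c + 1 ≤ k) (hk2 : 2 ≤ k)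
    (h4k : 4 * k ≤ n * (k - 2 * L)) : False := by
  have hn5 : 5 ≤ n := by linarith
  have hk2L : 0 < k - 2 * L := by nlinarith
  have hkL : 0 < k - L := by rcases le_or_gt 0 L with h | h <;> linarith
  have hst : 2 * (n - 2) ≤ s * t := by nlinarith [mul_nonneg (by linarith : (0:ℝ) ≤ s - 2) (by linarith : (0:ℝ) ≤ t - 2)]
  have hmid : (k - L) * (2 * (n - 2)) ≤ (k - L) * (s * t) :=
    mul_le_mul_of_nonneg_left hst (le_of_lt hkL)
  have hzn : c * n ≤ (k - 1) * n :=
    mul_le_mul_of_nonneg_right (by linarith) (by linarith)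
  have hkey : 2 * (k - L) * (n - 2) ≤ (k - 1) * n := by nlinarith [hmid, h1, hzn]
  have hlamneg : 4 * L ≤ -n := by nlinarith [hkey, h4k]
  nlinarith [hkey, hlamneg, hn5, hk2,
    mul_nonneg (by linarith : (0:ℝ) ≤ -(4*L) - n) (by linarith : (0:ℝ) ≤ n - 2),
    mul_nonneg (by linarith : (0:ℝ) ≤ k - 2) (by linarith : (0:ℝ) ≤ n - 4)]

lemma zprime_lower {V : Type} [Fintype V] [DecidableEq V] (E T : Finset (Finset V))
    (k₀ k₁ : ℕ) (ε μ : ℝ) (hμ : 0 < μ)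
    (hX : IsComplex E T) (hreg : IsRegularComplex E T k₀ k₁)
    (hexp : IsCosystolicExpander E T k₀ k₁ ε μ)
    (hV : max (4 / (1 - 2 * normEig (G0 E) k₀ 2)) (3 / μ) ≤ (Fintype.card V : ℝ))
    (hlam : normEig (G0 E) k₀ 2 < 1 / 2)
    (z : Finset (Finset V)) (hz : z ∈ Z1 E T) (v : V) :
    min (z.filter (fun e => v ∈ e)).card (k₀ - (z.filter (fun e => v ∈ e)).card)
      ≤ (z.filter (fun e => ¬ v ∈ e)).card := by
  classical
  obtain ⟨hzE, hz1⟩ := hz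
  have hE2 : ∀ e ∈ E, e.card = 2 := hX.1
  have hreg0 : ∀ u : V, (E.filter (fun e => u ∈ e)).card = k₀ := hreg.1
  set n := Fintype.card V with hn
  have hnpos : 0 < n := by
    rw [hn, Fintype.card_pos_iff]
    exact ⟨v⟩
  have hsplitz : (z.filter (fun e => v ∈ e)).card + (z.filter (fun e => ¬ v ∈ e)).card
      = z.card := Finset.card_filter_add_card_filter_not _
  have hble : (z.filter (fun e => v ∈ e)).card ≤ k₀ := by
    rw [← hreg0 v]
    apply Finset.card_le_card
    intro e he
    rw [Finset.mem_filter] at he ⊢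
    exact ⟨hzE he.1, he.2⟩
  rcases (hexp.2 z hzE).1 hz1 with hB | hbig
  swap
  · -- large cocycle case
    have hmun : 3 ≤ μ * n := by
      have h3 : 3 / μ ≤ (n : ℝ) := le_trans (le_max_right _ _) hV
      rw [div_le_iff₀ hμ] at h3
      linarith
    have hhs : n * k₀ = 2 * E.card := handshake E k₀ hE2 hreg0
    have hz32 : 3 * k₀ ≤ 2 * z.card := by
      have h1 : (3 * k₀ : ℝ) ≤ 2 * z.card := by
        have h2 : (2 : ℝ) * (μ * E.card) ≤ 2 * z.card := by linarith
        have h3 : (μ * (2 * E.card) : ℝ) ≤ 2 * z.card := by linarith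
        have h4 : ((2 * E.card : ℕ) : ℝ) = 2 * E.card := by push_cast; ring
        have h5 : (μ * (n * k₀ : ℕ) : ℝ) ≤ 2 * z.card := by
          rw [hhs, h4]; exact h3
        have h6 : ((n * k₀ : ℕ) : ℝ) = (n : ℝ) * k₀ := by push_cast; ring
        rw [h6] at h5
        nlinarith [hmun, h5, (Nat.cast_nonneg k₀ : (0:ℝ) ≤ (k₀:ℝ))]
      exact_mod_cast h1
    omega
  · -- coboundary case
    obtain ⟨S₀, hS₀⟩ := hB
    obtain ⟨S, hzS, hvS⟩ : ∃ S : Finset V, z = delta0 E S ∧ v ∉ S := by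
      by_cases hv0 : v ∈ S₀
      · exact ⟨S₀ᶜ, by rw [hS₀, delta0_compl E hE2], by simpa using hv0⟩
      · exact ⟨S₀, hS₀, hv0⟩
    have hzmem : ∀ e, e ∈ z ↔ (e ∈ E ∧ (e ∩ S).card = 1) := by
      intro e
      rw [hzS, delta0, Finset.mem_filter]
    by_contra hcon
    push_neg at hcon
    rw [lt_min_iff] at hcon
    obtain ⟨hcon1, hcon2⟩ := hcon
    set Zv := z.filter (fun e => v ∈ e) with hZv
    set Zp := z.filter (fun e => ¬ v ∈ e) with hZp
    set b := Zv.card with hb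
    have hb1 : 1 ≤ b := by omega
    have hbk : b < k₀ := by omega
    have hk2 : 2 ≤ k₀ := by omega
    -- b ≤ |S|
    have hbs : b ≤ S.card := by
      rw [hb, hZv]
      apply Finset.card_le_card_of_injOn (oth v)
      · intro e he
        rw [Finset.mem_coe, Finset.mem_filter] at he
        obtain ⟨hez, hve⟩ := he
        have he2 : e.card = 2 := hE2 e (hzE hez)
        obtain ⟨hmem, hne, heq⟩ := oth_spec he2 hve
        have hcS : (e ∩ S).card = 1 := ((hzmem e).mp hez).2
        obtain ⟨x, hx⟩ := Finset.card_eq_one.mp hcS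
        have hxe : x ∈ e ∧ x ∈ S := by
          have : x ∈ e ∩ S := hx ▸ Finset.mem_singleton_self x
          exact Finset.mem_inter.mp this
        have : x ∈ ({v, oth v e} : Finset V) := heq ▸ hxe.1
        rcases Finset.mem_insert.mp this with rfl | h
        · exact absurd hxe.2 hvS
        · rw [Finset.mem_singleton] at h
          exact h ▸ hxe.2
      · intro e he f hf hh
        simp only [Finset.coe_filter, Set.mem_setOf_eq] at he hf
        exact oth_inj (hE2 e (hzE he.1)) (hE2 f (hzE hf.1)) he.2 hf.2 hh
    -- double counting over S
    have hdcS : ∑ u ∈ S, (Zp.filter (fun e => u ∈ e)).card = Zp.card := by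
      rw [count_swap]
      have h1 : ∀ e ∈ Zp, (e ∩ S).card = 1 := by
        intro e he
        rw [hZp, Finset.mem_filter] at he
        exact ((hzmem e).mp he.1).2
      rw [Finset.sum_congr rfl h1, Finset.sum_const, smul_eq_mul, mul_one]
    -- per-vertex bound over S
    have hpvS : ∀ u ∈ S, k₀ ≤ (Zp.filter (fun e => u ∈ e)).card + S.card := by
      intro u hu
      have hSpos : 1 ≤ S.card := Finset.card_pos.mpr ⟨u, hu⟩
      set Eu := E.filter (fun e => u ∈ e) with hEu
      set Zu := Zp.filter (fun e => u ∈ e) with hZu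
      have hEuk : Eu.card = k₀ := hreg0 u
      have hsub : Eu ⊆ Zu ∪ (Eu \ Zu) := by
        intro e he
        by_cases h : e ∈ Zu
        · exact Finset.mem_union_left _ h
        · exact Finset.mem_union_right _ (Finset.mem_sdiff.mpr ⟨he, h⟩)
      have hcard1 : k₀ ≤ Zu.card + (Eu \ Zu).card := by
        calc k₀ = Eu.card := hEuk.symm
          _ ≤ (Zu ∪ (Eu \ Zu)).card := Finset.card_le_card hsub
          _ ≤ Zu.card + (Eu \ Zu).card := Finset.card_union_le _ _
      have hcard2 : (Eu \ Zu).card ≤ S.card := by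
        have htgt : (Eu \ Zu).card ≤ (insert v (S.erase u)).card := by
          apply Finset.card_le_card_of_injOn (oth u)
          · intro e he
            rw [Finset.mem_coe, Finset.mem_sdiff, hEu, Finset.mem_filter] at he
            obtain ⟨⟨heE, hue⟩, henz⟩ := he
            have he2 : e.card = 2 := hE2 e heE
            obtain ⟨hmem, hne, heq⟩ := oth_spec he2 hue
            have hnz : ¬ (e ∈ z ∧ ¬ v ∈ e) := by
              intro hh
              apply henz
              rw [hZu, Finset.mem_filter, hZp, Finset.mem_filter]
              exact ⟨⟨hh.1, hh.2⟩, hue⟩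
            by_cases hve : v ∈ e
            · have : v ∈ ({u, oth u e} : Finset V) := heq ▸ hve
              rcases Finset.mem_insert.mp this with rfl | h
              · exact absurd hu hvS
              · rw [Finset.mem_singleton] at h
                rw [← h]
                exact Finset.mem_insert_self v _
            · have hez : e ∉ z := fun h => hnz ⟨h, hve⟩
              have hcS : ¬ (e ∩ S).card = 1 := fun h => hez ((hzmem e).mpr ⟨heE, h⟩)
              have hoS : oth u e ∈ S := by
                by_contra hoS
                apply hcS
                have : e ∩ S = {u} := by
                  ext x
                  simp only [Finset.mem_inter, Finset.mem_singleton]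
                  constructor
                  · rintro ⟨hxe, hxS⟩
                    have : x ∈ ({u, oth u e} : Finset V) := heq ▸ hxe
                    rcases Finset.mem_insert.mp this with rfl | h
                    · rfl
                    · rw [Finset.mem_singleton] at h
                      exact absurd (h ▸ hxS) hoS
                  · rintro rfl
                    exact ⟨hue, hu⟩
                rw [this, Finset.card_singleton]
              exact Finset.mem_insert_of_mem (Finset.mem_erase.mpr ⟨hne, hoS⟩)
          · intro e he f hf hh
            simp only [Finset.coe_sdiff, Set.mem_diff, Finset.mem_coe, Finset.mem_sdiff] at he hf
            have hue : u ∈ e := by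
              have := he.1
              rw [hEu, Finset.mem_filter] at this
              exact this.2
            have huf : u ∈ f := by
              have := hf.1
              rw [hEu, Finset.mem_filter] at this
              exact this.2
            have heE : e ∈ E := by
              have := he.1
              rw [hEu, Finset.mem_filter] at this
              exact this.1
            have hfE : f ∈ E := by
              have := hf.1
              rw [hEu, Finset.mem_filter] at this
              exact this.1
            exact oth_inj (hE2 e heE) (hE2 f hfE) hue huf hh
        calc (Eu \ Zu).card ≤ (insert v (S.erase u)).card := htgt
          _ ≤ (S.erase u).card + 1 := Finset.card_insert_le _ _
          _ = (S.card - 1) + 1 := by rw [Finset.card_erase_of_mem hu]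
          _ = S.card := by omega
      omega
    -- k₀ ≤ |S|
    have hsge : k₀ ≤ S.card := by
      by_contra hlt
      push_neg at hlt
      have h1 : ∀ u ∈ S, 1 ≤ (Zp.filter (fun e => u ∈ e)).card := by
        intro u hu
        have := hpvS u hu
        omega
      have h2 : S.card ≤ Zp.card := by
        rw [← hdcS]
        simpa using Finset.card_nsmul_le_sum S _ 1 h1
      omega
    -- the complement side
    set t := (Sᶜ : Finset V).card with ht
    have hvSc : v ∈ (Sᶜ : Finset V) := Finset.mem_compl.mpr hvS
    have ht1 : 1 ≤ t := Finset.card_pos.mpr ⟨v, hvSc⟩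
    have hnst : S.card + t = n := by
      rw [ht, hn]
      exact Finset.card_add_card_compl S
    set W := (Sᶜ : Finset V).erase v with hW
    have hWcard : W.card = t - 1 := Finset.card_erase_of_mem hvSc
    -- t = 1 is impossible
    have htne1 : t ≠ 1 := by
      intro ht1'
      have hSc : (Sᶜ : Finset V) = {v} := by
        obtain ⟨x, hx⟩ := Finset.card_eq_one.mp (ht ▸ ht1')
        rw [hx]
        rw [hx] at hvSc
        rw [Finset.mem_singleton] at hvSc
        rw [hvSc]
      have hsub : E.filter (fun e => v ∈ e) ⊆ Zv := by
        intro e he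
        rw [Finset.mem_filter] at he
        obtain ⟨heE, hve⟩ := he
        have he2 : e.card = 2 := hE2 e heE
        have hsplit2 : (e ∩ Sᶜ).card + (e ∩ S).card = 2 := by
          have h1 : e ∩ Sᶜ = e \ S := by
            ext x; simp [Finset.mem_inter, Finset.mem_sdiff, Finset.mem_compl]
          rw [h1, Finset.card_sdiff_add_card_inter, he2]
        have hev : e ∩ Sᶜ = {v} := by
          rw [hSc]
          ext x
          simp only [Finset.mem_inter, Finset.mem_singleton]
          constructor
          · tauto
          · rintro rfl; exact ⟨hve, rfl⟩
        rw [hev, Finset.card_singleton] at hsplit2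
        rw [hZv, Finset.mem_filter]
        exact ⟨(hzmem e).mpr ⟨heE, by omega⟩, hve⟩
      have : k₀ ≤ b := by
        rw [hb, ← hreg0 v]
        exact Finset.card_le_card hsub
      omega
    have ht2 : 2 ≤ t := by omega
    -- double counting over W
    have hdcW : ∑ w ∈ W, (Zp.filter (fun e => w ∈ e)).card = Zp.card := by
      rw [count_swap]
      have h1 : ∀ e ∈ Zp, (e ∩ W).card = 1 := by
        intro e he
        rw [hZp, Finset.mem_filter] at he
        obtain ⟨hez, hve⟩ := he
        have heE : e ∈ E := hzE hez
        have he2 : e.card = 2 := hE2 e heE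
        have hcS : (e ∩ S).card = 1 := ((hzmem e).mp hez).2
        obtain ⟨u, hu⟩ := Finset.card_eq_one.mp hcS
        have hue : u ∈ e ∧ u ∈ S := by
          have : u ∈ e ∩ S := hu ▸ Finset.mem_singleton_self u
          exact Finset.mem_inter.mp this
        obtain ⟨hmem, hne, heq⟩ := oth_spec he2 hue.1
        have hgoal : e ∩ W = {oth u e} := by
          ext x
          simp only [Finset.mem_inter, hW, Finset.mem_erase, Finset.mem_compl,
            Finset.mem_singleton]
          constructor
          · rintro ⟨hxe, hxv, hxS⟩
            have : x ∈ ({u, oth u e} : Finset V) := heq ▸ hxe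
            rcases Finset.mem_insert.mp this with rfl | h
            · exact absurd hue.2 hxS
            · exact Finset.mem_singleton.mp h
          · rintro rfl
            refine ⟨hmem, ?_, ?_⟩
            · intro hv'
              exact hve (hv' ▸ hmem)
            · intro hoS
              have : oth u e ∈ e ∩ S := Finset.mem_inter.mpr ⟨hmem, hoS⟩
              rw [hu, Finset.mem_singleton] at this
              exact hne this
        rw [hgoal, Finset.card_singleton]
      rw [Finset.sum_congr rfl h1, Finset.sum_const, smul_eq_mul, mul_one]
    -- per-vertex bound over W
    have hpvW : ∀ w ∈ W, k₀ ≤ (Zp.filter (fun e => w ∈ e)).card + (t - 1) := by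
      intro w hw
      have hwv : w ≠ v := (Finset.mem_erase.mp hw).1
      have hwSc : w ∈ (Sᶜ : Finset V) := (Finset.mem_erase.mp hw).2
      have hwS : w ∉ S := Finset.mem_compl.mp hwSc
      set Ew := E.filter (fun e => w ∈ e) with hEw
      set Zw := Zp.filter (fun e => w ∈ e) with hZw
      have hEwk : Ew.card = k₀ := hreg0 w
      have hsub : Ew ⊆ Zw ∪ (Ew \ Zw) := by
        intro e he
        by_cases h : e ∈ Zw
        · exact Finset.mem_union_left _ h
        · exact Finset.mem_union_right _ (Finset.mem_sdiff.mpr ⟨he, h⟩)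
      have hcard1 : k₀ ≤ Zw.card + (Ew \ Zw).card := by
        calc k₀ = Ew.card := hEwk.symm
          _ ≤ (Zw ∪ (Ew \ Zw)).card := Finset.card_le_card hsub
          _ ≤ Zw.card + (Ew \ Zw).card := Finset.card_union_le _ _
      have hcard2 : (Ew \ Zw).card ≤ t - 1 := by
        have htgt : (Ew \ Zw).card ≤ ((Sᶜ : Finset V).erase w).card := by
          apply Finset.card_le_card_of_injOn (oth w)
          · intro e he
            rw [Finset.mem_coe, Finset.mem_sdiff, hEw, Finset.mem_filter] at he
            obtain ⟨⟨heE, hwe⟩, henz⟩ := he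
            have he2 : e.card = 2 := hE2 e heE
            obtain ⟨hmem, hne, heq⟩ := oth_spec he2 hwe
            have hnz : ¬ (e ∈ z ∧ ¬ v ∈ e) := by
              intro hh
              apply henz
              rw [hZw, Finset.mem_filter, hZp, Finset.mem_filter]
              exact ⟨⟨hh.1, hh.2⟩, hwe⟩
            by_cases hve : v ∈ e
            · have : v ∈ ({w, oth w e} : Finset V) := heq ▸ hve
              rcases Finset.mem_insert.mp this with rfl | h
              · exact absurd rfl hwv
              · rw [Finset.mem_singleton] at h
                rw [← h]
                exact Finset.mem_erase.mpr ⟨fun hh => hwv hh.symm, hvSc⟩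
            · have hez : e ∉ z := fun h => hnz ⟨h, hve⟩
              have hcS : ¬ (e ∩ S).card = 1 := fun h => hez ((hzmem e).mpr ⟨heE, h⟩)
              have hoS : oth w e ∉ S := by
                intro hoS
                apply hcS
                have : e ∩ S = {oth w e} := by
                  ext x
                  simp only [Finset.mem_inter, Finset.mem_singleton]
                  constructor
                  · rintro ⟨hxe, hxS⟩
                    have : x ∈ ({w, oth w e} : Finset V) := heq ▸ hxe
                    rcases Finset.mem_insert.mp this with rfl | h
                    · exact absurd hxS hwS
                    · exact Finset.mem_singleton.mp h
                  · rintro rfl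
                    exact ⟨hmem, hoS⟩
                rw [this, Finset.card_singleton]
              exact Finset.mem_erase.mpr ⟨hne, Finset.mem_compl.mpr hoS⟩
          · intro e he f hf hh
            simp only [Finset.coe_sdiff, Set.mem_diff, Finset.mem_coe, Finset.mem_sdiff] at he hf
            have hwe : w ∈ e := by
              have := he.1
              rw [hEw, Finset.mem_filter] at this
              exact this.2
            have hwf : w ∈ f := by
              have := hf.1
              rw [hEw, Finset.mem_filter] at this
              exact this.2
            have heE : e ∈ E := by
              have := he.1
              rw [hEw, Finset.mem_filter] at this
              exact this.1
            have hfE : f ∈ E := by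
              have := hf.1
              rw [hEw, Finset.mem_filter] at this
              exact this.1
            exact oth_inj (hE2 e heE) (hE2 f hfE) hwe hwf hh
        calc (Ew \ Zw).card ≤ ((Sᶜ : Finset V).erase w).card := htgt
          _ = t - 1 := Finset.card_erase_of_mem hwSc
      omega
    -- k₀ + 1 ≤ t
    have htge : k₀ + 1 ≤ t := by
      by_contra hlt
      push_neg at hlt
      have hq : ∀ w ∈ W, k₀ - (t - 1) ≤ (Zp.filter (fun e => w ∈ e)).card := by
        intro w hw
        have := hpvW w hw
        omega
      have h2 : (t - 1) * (k₀ - (t - 1)) ≤ Zp.card := by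
        rw [← hdcW]
        have h2' := Finset.card_nsmul_le_sum W
          (fun w => (Zp.filter (fun e => w ∈ e)).card) (k₀ - (t - 1)) hq
        rw [hWcard, smul_eq_mul] at h2'
        exact h2'
      have h3 : (t - 1) + (k₀ - (t - 1)) ≤ (t - 1) * (k₀ - (t - 1)) + 1 :=
        nat_add_le_mul_succ (by omega) (by omega)
      omega
    -- spectral contradiction
    have hn2 : 2 ≤ n := by omega
    have hzcard : (delta0 E S).card = z.card := by rw [hzS]
    have hck : z.card + 1 ≤ k₀ := by omega
    -- real arithmetic
    unfold normEig at hlam hV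
    rw [← hn] at hlam hV
    have hmix := delta0_card_bound E k₀ hE2 hreg0 (by omega : 2 ≤ Fintype.card V) S
    rw [← hn] at hmix
    set L := (eigsAsc (G0 E)).getD (n - 2) 0 with hL
    have hk0R : (0:ℝ) < k₀ := by
      have : (0:ℕ) < k₀ := by omega
      exact_mod_cast this
    have hLhalf : L < k₀ / 2 := by
      rw [div_lt_iff₀ hk0R] at hlam
      linarith
    have h12 : 0 < 1 - 2 * (L / (k₀:ℝ)) := by
      have : L / k₀ < 1 / 2 := hlam
      linarith
    have hVleft : 4 / (1 - 2 * (L / (k₀:ℝ))) ≤ (n : ℝ) := le_trans (le_max_left _ _) hV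
    have h4 : 4 ≤ (n:ℝ) * (1 - 2 * (L / k₀)) := by
      rw [div_le_iff₀ h12] at hVleft
      linarith
    have h4k : 4 * (k₀:ℝ) ≤ (n:ℝ) * ((k₀:ℝ) - 2 * L) := by
      have hh := mul_le_mul_of_nonneg_right h4 (le_of_lt hk0R)
      have hid : (n:ℝ) * (1 - 2 * (L / k₀)) * k₀ = (n:ℝ) * ((k₀:ℝ) - 2 * L) := by
        field_simp
      rw [hid] at hh
      linarith
    have hsR : (k₀ : ℝ) ≤ (S.card : ℝ) := by exact_mod_cast hsge
    have htR : (k₀ : ℝ) + 1 ≤ (t : ℝ) := by exact_mod_cast htge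
    have hnR : (n : ℝ) = (S.card : ℝ) + (t : ℝ) := by exact_mod_cast hnst.symm
    have hcR : (z.card : ℝ) + 1 ≤ (k₀ : ℝ) := by exact_mod_cast hck
    have hk2R : (2:ℝ) ≤ (k₀:ℝ) := by exact_mod_cast hk2
    rw [hzcard] at hmix
    -- hmix : (k₀ - L) * S.card * (n - S.card) ≤ z.card * n
    have htn : (n:ℝ) - (S.card:ℝ) = (t:ℝ) := by linarith
    rw [htn] at hmix
    have hfin : ((k₀:ℝ) - L) * (S.card:ℝ) * (t:ℝ) ≤ ((z.card:ℝ)) * ((n:ℝ)) := hmix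
    exact final_arith (k₀:ℝ) L (S.card:ℝ) (t:ℝ) (n:ℝ) (z.card:ℝ) hfin hsR htR hnR hcR hk2R h4k

theorem dist_of_local_view_from_cocycles
    {V : Type} [Fintype V] [DecidableEq V] (E T : Finset (Finset V))
    (k₀ k₁ : ℕ) (ε μ : ℝ) (hε : 0 < ε) (hμ : 0 < μ)
    (hX : IsComplex E T) (hreg : IsRegularComplex E T k₀ k₁)
    (hexp : IsCosystolicExpander E T k₀ k₁ ε μ)
    (hV : max (4 / (1 - 2 * normEig (G0 E) k₀ 2)) (3 / μ) ≤ (Fintype.card V : ℝ))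
    (hlam : normEig (G0 E) k₀ 2 < 1 / 2)
    (F : Finset (Finset V)) (hF : F ⊆ E) (hF0 : F ≠ ∅) (hFE : F ≠ E) (v : V) :
    famDist (localView F v) (Z1 E T) =
      min (localView F v).card (k₀ - (localView F v).card) := by
  classical
  have hE2 : ∀ e ∈ E, e.card = 2 := hX.1
  have hreg0 : ∀ u : V, (E.filter (fun e => u ∈ e)).card = k₀ := hreg.1
  set Fv := localView F v with hFv
  have hFvsub : Fv ⊆ E.filter (fun e => v ∈ e) := by
    intro e he
    rw [hFv, localView, Finset.mem_filter] at he
    rw [Finset.mem_filter]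
    exact ⟨hF he.1, he.2⟩
  have hFvcard : Fv.card ≤ k₀ := by
    rw [← hreg0 v]
    exact Finset.card_le_card hFvsub
  have hEvZ1 : E.filter (fun e => v ∈ e) ∈ Z1 E T := by
    rw [← star_eq_delta0_singleton E hE2 v]
    exact cut_in_Z1 E T hX {v}
  have h1 : Fv.card ∈ {d | ∃ z ∈ Z1 E T, sdist Fv z = d} := by
    refine ⟨∅, empty_in_Z1 E T, ?_⟩
    simp [sdist]
  have h2 : k₀ - Fv.card ∈ {d | ∃ z ∈ Z1 E T, sdist Fv z = d} := by
    refine ⟨E.filter (fun e => v ∈ e), hEvZ1, ?_⟩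
    rw [sdist, Finset.sdiff_eq_empty_iff_subset.mpr hFvsub, Finset.card_empty,
      Finset.card_sdiff_of_subset hFvsub, hreg0 v]
    omega
  apply le_antisymm
  · exact le_min (Nat.sInf_le h1) (Nat.sInf_le h2)
  · apply le_csInf ⟨_, h1⟩
    rintro d ⟨z, hz, rfl⟩
    -- decompose the symmetric difference
    have hzE : z ⊆ E := hz.1
    set zf := z.filter (fun e => v ∈ e) with hzf
    set zp := z.filter (fun e => ¬ v ∈ e) with hzp
    have hd1 : Fv \ z = Fv \ zf := by
      ext e
      simp only [Finset.mem_sdiff, hzf, Finset.mem_filter]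
      constructor
      · rintro ⟨heFv, hez⟩
        exact ⟨heFv, fun hh => hez hh.1⟩
      · rintro ⟨heFv, hez⟩
        have hve : v ∈ e := by
          rw [hFv, localView, Finset.mem_filter] at heFv
          exact heFv.2
        exact ⟨heFv, fun hh => hez ⟨hh, hve⟩⟩
    have hd2 : z \ Fv = (zf \ Fv) ∪ zp := by
      ext e
      simp only [Finset.mem_sdiff, Finset.mem_union, hzf, hzp, Finset.mem_filter]
      constructor
      · rintro ⟨hez, heFv⟩
        by_cases hve : v ∈ e
        · exact Or.inl ⟨⟨hez, hve⟩, heFv⟩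
        · exact Or.inr ⟨hez, hve⟩
      · rintro (⟨⟨hez, _⟩, heFv⟩ | ⟨hez, hve⟩)
        · exact ⟨hez, heFv⟩
        · refine ⟨hez, fun hh => hve ?_⟩
          rw [hFv, localView, Finset.mem_filter] at hh
          exact hh.2
    have hdisj : Disjoint (zf \ Fv) zp := by
      rw [Finset.disjoint_left]
      intro e he1 he2
      rw [Finset.mem_sdiff, hzf, Finset.mem_filter] at he1
      rw [hzp, Finset.mem_filter] at he2
      exact he2.2 he1.1.2
    have hsd : sdist Fv z = (Fv \ zf).card + ((zf \ Fv).card + zp.card) := by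
      rw [sdist, hd1, hd2, Finset.card_union_of_disjoint hdisj]
    have hkey : min zf.card (k₀ - zf.card) ≤ zp.card :=
      zprime_lower E T k₀ k₁ ε μ hμ hX hreg hexp hV hlam z hz v
    have hzfk : zf.card ≤ k₀ := by
      rw [← hreg0 v]
      apply Finset.card_le_card
      intro e he
      rw [hzf, Finset.mem_filter] at he
      rw [Finset.mem_filter]
      exact ⟨hzE he.1, he.2⟩
    have hc1 : Fv.card ≤ (Fv \ zf).card + zf.card := Finset.card_le_card_sdiff_add_card
    have hc2 : zf.card ≤ (zf \ Fv).card + Fv.card := Finset.card_le_card_sdiff_add_card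
    rw [hsd]
    omega
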